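/- Let a, b : Fin 3 → ℝ and C : Matrix (Fin 3) (Fin 3) ℝ, and let X := 4 • ρ(a,b,C) − I₄ : Matrix (Fin 2 × Fin 2) (Fin 2 × Fin 2) ℂ. Then the characteristic polynomial of X equals x⁴ + p·x² + q·x + r in ℂ[x] (with the real coefficients coerced to ℂ), where p = −2·(⟨C,C⟩ + |a|² + |b|²), q = −8·(⟨a, C.mulVec b⟩ − det C), and r = ⟨C,C⟩² + 2·(|a|² + |b|²)·⟨C,C⟩ + (|a|² − |b|²)² − 4·(⟨Ĉ,Ĉ⟩ + ⟨a, (C*Cᵀ).mulVec a⟩ + ⟨b, (Cᵀ*C).mulVec b⟩) + 8·⟨a, Ĉ.mulVec b⟩, with Ĉ := (Matrix.adjugate C)ᵀ. -/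

import Mathlib

open Matrix Kronecker Polynomial

/-- The three Pauli matrices (indexed by `Fin 3`, so `pauli 0 = σ₁`, etc.). -/
noncomputable def pauli : Fin 3 → Matrix (Fin 2) (Fin 2) ℂ :=
  ![!![0, 1; 1, 0], !![0, -Complex.I; Complex.I, 0], !![1, 0; 0, -1]]

/-- The two-qubit Bloch matrix `ρ(a,b,C)`. -/
noncomputable def blochMat (a b : Fin 3 → ℝ) (C : Matrix (Fin 3) (Fin 3) ℝ) :
    Matrix (Fin 2 × Fin 2) (Fin 2 × Fin 2) ℂ :=
  (1 / 4 : ℂ) •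
    ((1 : Matrix (Fin 2) (Fin 2) ℂ) ⊗ₖ (1 : Matrix (Fin 2) (Fin 2) ℂ)
      + ∑ i, (a i : ℂ) • (pauli i ⊗ₖ (1 : Matrix (Fin 2) (Fin 2) ℂ))
      + ∑ j, (b j : ℂ) • ((1 : Matrix (Fin 2) (Fin 2) ℂ) ⊗ₖ pauli j)
      + ∑ i, ∑ j, (C i j : ℂ) • (pauli i ⊗ₖ pauli j))

set_option maxHeartbeats 1000000000 in
theorem charpoly_of_shifted_bloch_matrix
    (a b : Fin 3 → ℝ) (C : Matrix (Fin 3) (Fin 3) ℝ) :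
    Matrix.charpoly
        ((4 : ℂ) • blochMat a b C - (1 : Matrix (Fin 2 × Fin 2) (Fin 2 × Fin 2) ℂ)) =
      X ^ 4
        + Polynomial.C ((-2 * ((Cᵀ * C).trace + (∑ i, a i ^ 2) + (∑ i, b i ^ 2)) : ℝ) : ℂ)
            * X ^ 2
        + Polynomial.C ((-8 * ((∑ i, a i * C.mulVec b i) - C.det) : ℝ) : ℂ) * X
        + Polynomial.C
            ((((Cᵀ * C).trace) ^ 2
                + 2 * ((∑ i, a i ^ 2) + (∑ i, b i ^ 2)) * (Cᵀ * C).trace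
                + ((∑ i, a i ^ 2) - (∑ i, b i ^ 2)) ^ 2
                - 4 * (((((C.adjugate)ᵀ)ᵀ * (C.adjugate)ᵀ).trace)
                    + (∑ i, a i * (C * Cᵀ).mulVec a i)
                    + (∑ i, b i * (Cᵀ * C).mulVec b i))
                + 8 * (∑ i, a i * ((C.adjugate)ᵀ).mulVec b i) : ℝ) : ℂ) := by
  rw [← Matrix.charpoly_reindex (finProdFinEquiv : Fin 2 × Fin 2 ≃ Fin 4)]
  rw [Matrix.charpoly]
  have e0 : (finProdFinEquiv.symm (0:Fin 4) : Fin 2 × Fin 2) = (0,0) := rfl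
  have e1 : (finProdFinEquiv.symm (1:Fin 4) : Fin 2 × Fin 2) = (0,1) := rfl
  have e2 : (finProdFinEquiv.symm (2:Fin 4) : Fin 2 × Fin 2) = (1,0) := rfl
  have e3 : (finProdFinEquiv.symm (3:Fin 4) : Fin 2 × Fin 2) = (1,1) := rfl
  simp only [Matrix.det_succ_row_zero, Fin.sum_univ_succ, Matrix.det_fin_one,
    Matrix.submatrix_apply, Matrix.reindex_apply, charmatrix_apply,
    Fin.succAbove, Matrix.diagonal_apply, e0, e1, e2, e3]
  norm_num [Fin.lt_def, Matrix.one_apply, blochMat, pauli, Fin.sum_univ_three,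
    Fin.divNat, Fin.modNat]
  simp (config := { decide := true }) only [Fin.isValue, if_true, if_false,
    Matrix.trace, Matrix.diag, Matrix.mul_apply, Matrix.mulVec, dotProduct,
    Matrix.det_fin_three, Matrix.adjugate_fin_three, Matrix.transpose_apply,
    Fin.sum_univ_three, Matrix.cons_val', Matrix.cons_val_zero, Matrix.cons_val_one, Matrix.cons_val_two, Matrix.tail_cons,
    Matrix.head_cons, Matrix.head_fin_const, Matrix.cons_val_fin_one, Matrix.empty_val',
    Matrix.of_apply]
  push_cast
  have hq : ∀ p : Polynomial ℂ, (4:Polynomial ℂ) * (Polynomial.C (1/4:ℂ) * p) = p := by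
    intro p
    rw [← mul_assoc, ← _root_.map_ofNat Polynomial.C 4, ← _root_.map_mul]
    norm_num
  simp only [_root_.map_add, _root_.map_sub, _root_.map_mul, _root_.map_neg, _root_.map_pow, _root_.map_one, _root_.map_ofNat, Polynomial.C_1, _root_.map_zero]
  simp only [hq, neg_mul, mul_neg, neg_neg]
  set_option maxRecDepth 100000 in
  ring_nf
  have h2 : (Polynomial.C Complex.I) ^ 2 = -1 := by
    rw [← map_pow, Complex.I_sq]; simp
  have h3 : (Polynomial.C Complex.I) ^ 3 = -(Polynomial.C Complex.I) := by
    rw [pow_succ, h2]; ring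
  have h4 : (Polynomial.C Complex.I) ^ 4 = 1 := by
    rw [show (4:Nat) = 2*2 from rfl, pow_mul, h2]; ring
  simp only [h2, h3, h4]
  ring
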